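/- The map g:ℕ→ℕ defined by g(n)=⌊φn⌋−2 if n∈R_{1,0}, g(n)=⌊φn⌋ if n∈R_{2,0}, g(n)=⌊(φ−1)n⌋+2 if n∈R_{2,2}, and g(n)=⌊(φ−1)n⌋+1 if n∈R_{3,1}, is a well-defined bijection of ℕ onto itself satisfying g(g(n))=n for all n∈ℕ and g≠id; that is, g is a permutation of ℕ of order 2. -/

import Mathlib

/-- The golden ratio φ = (1 + √5)/2. -/
noncomputable def phi : ℝ := (1 + Real.sqrt 5) / 2

/-- The lower Wythoff sequence a(n) = ⌊nφ⌋. -/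
noncomputable def wa (n : ℕ) : ℕ := ⌊(n : ℝ) * phi⌋₊

lemma phi_eq : phi = Real.goldenRatio := rfl
lemma one_lt_phi : 1 < phi := Real.one_lt_goldenRatio
lemma phi_lt_two : phi < 2 := Real.goldenRatio_lt_two
lemma phi_sq : phi * phi = phi + 1 := by
  have := Real.goldenRatio_sq; rw [sq] at this; exact_mod_cast (phi_eq ▸ this)
lemma phi_irr : Irrational phi := phi_eq ▸ Real.goldenRatio_irrational

lemma nphi_irr {n : ℕ} (h : 0 < n) : Irrational ((n : ℝ) * phi) :=
  phi_irr.natCast_mul h.ne'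

lemma wa_bounds {n : ℕ} (h : 0 < n) :
    (wa n : ℝ) < n * phi ∧ (n : ℝ) * phi < wa n + 1 := by
  have h0 : (0:ℝ) ≤ (n:ℝ) * phi := mul_nonneg (Nat.cast_nonneg n) (by nlinarith [one_lt_phi])
  have h1 : (wa n : ℝ) ≤ n * phi := Nat.floor_le h0
  have h2 : (n : ℝ) * phi < wa n + 1 := Nat.lt_floor_add_one _
  have h3 : (wa n : ℝ) ≠ n * phi := fun he => (nphi_irr h) ⟨wa n, by exact_mod_cast he⟩
  exact ⟨lt_of_le_of_ne h1 h3, h2⟩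

lemma wa_pos {n : ℕ} (h : 0 < n) : 0 < wa n := by
  have h1 : (1:ℝ) ≤ (n:ℝ) := by exact_mod_cast h
  exact Nat.le_floor (by push_cast; nlinarith [one_lt_phi])

lemma wa_floor_eq {m v : ℕ} (h1 : (v:ℝ) ≤ (m:ℝ) * phi) (h2 : (m:ℝ) * phi < v + 1) :
    wa m = v := by
  unfold wa
  rw [Nat.floor_eq_iff (mul_nonneg (Nat.cast_nonneg m) (by nlinarith [one_lt_phi]))]
  exact ⟨h1, h2⟩

lemma waa {n : ℕ} (h : 0 < n) : wa (wa n) + 1 = wa n + n := by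
  obtain ⟨hl, hr⟩ := wa_bounds h
  have key : wa (wa n) = wa n + n - 1 := by
    have hn1 : 1 ≤ n := h
    have hw1 : 1 ≤ wa n := wa_pos h
    apply wa_floor_eq
    · push_cast [Nat.cast_sub (by omega : 1 ≤ wa n + n)]
      nlinarith [phi_sq, one_lt_phi, phi_lt_two]
    · push_cast [Nat.cast_sub (by omega : 1 ≤ wa n + n)]
      nlinarith [phi_sq, one_lt_phi, phi_lt_two]
  omega

lemma wab {n : ℕ} (h : 0 < n) : wa (wa n + n) = 2 * wa n + n := by
  obtain ⟨hl, hr⟩ := wa_bounds h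
  apply wa_floor_eq <;> push_cast <;>
    nlinarith [phi_sq, one_lt_phi, phi_lt_two]

lemma winv {n : ℕ} (h : 0 < n) : ⌊(phi - 1) * (wa n : ℝ)⌋₊ + 1 = n := by
  obtain ⟨hl, hr⟩ := wa_bounds h
  have h1 : 1 ≤ n := h
  have key : ⌊(phi - 1) * (wa n : ℝ)⌋₊ = n - 1 := by
    rw [Nat.floor_eq_iff (by nlinarith [one_lt_phi, Nat.cast_nonneg (α := ℝ) (wa n)])]
    constructor
    · push_cast [Nat.cast_sub h1]
      nlinarith [phi_sq, one_lt_phi, phi_lt_two]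
    · push_cast [Nat.cast_sub h1]
      nlinarith [phi_sq, one_lt_phi, phi_lt_two]
  omega

lemma wa_strictMono : StrictMono wa := by
  have step : ∀ n : ℕ, wa n < wa (n + 1) := by
    intro n
    have : (n:ℝ) * phi + 1 ≤ ((n+1:ℕ):ℝ) * phi := by push_cast; nlinarith [one_lt_phi]
    have h2 : wa n + 1 ≤ wa (n+1) := by
      have := Nat.floor_le_floor (R := ℝ) this
      rwa [Nat.floor_add_one (mul_nonneg (Nat.cast_nonneg n) (by nlinarith [one_lt_phi]))] at this
    omega
  exact strictMono_nat_of_lt_succ step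

lemma phi_nonneg : (0:ℝ) ≤ phi := by nlinarith [one_lt_phi]

lemma cast_wa (m : ℕ) : ((wa m : ℤ)) = ⌊(m:ℝ) * phi⌋ :=
  Int.natCast_floor_eq_floor (mul_nonneg (Nat.cast_nonneg m) phi_nonneg)

lemma conj_exp : Real.HolderConjugate phi (phi + 1) := by
  rw [Real.holderConjugate_iff]
  constructor
  · exact one_lt_phi
  · have h0 : phi ≠ 0 := by nlinarith [one_lt_phi]
    have h1 : phi + 1 ≠ 0 := by nlinarith [one_lt_phi]
    field_simp
    nlinarith [phi_sq]

/-- Rayleigh/Beatty partition for φ and φ². -/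
lemma beatty (j : ℕ) (hj : 0 < j) :
    ((∃ m, 0 < m ∧ wa m = j) ∧ ¬∃ m, 0 < m ∧ wa m + m = j) ∨
    ((∃ m, 0 < m ∧ wa m + m = j) ∧ ¬∃ m, 0 < m ∧ wa m = j) := by
  have hray := Irrational.beattySeq_symmDiff_beattySeq_pos conj_exp phi_irr
  have hjmem : (j : ℤ) ∈ {n : ℤ | 0 < n} := by
    simp only [Set.mem_setOf_eq]; exact_mod_cast hj
  rw [← hray, Set.mem_symmDiff] at hjmem
  have hA : ((j:ℤ) ∈ {x | ∃ k > 0, beattySeq phi k = x}) ↔ ∃ m, 0 < m ∧ wa m = j := by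
    constructor
    · rintro ⟨k, hk, hbk⟩
      refine ⟨k.toNat, by omega, ?_⟩
      have hkk : ((k.toNat : ℕ) : ℝ) = (k : ℝ) := by
        exact_mod_cast congrArg (Int.cast : ℤ → ℝ) (Int.toNat_of_nonneg hk.le)
      have : (wa k.toNat : ℤ) = (j : ℤ) := by
        rw [cast_wa, hkk, ← hbk]; rfl
      exact_mod_cast this
    · rintro ⟨m, hm, hwm⟩
      refine ⟨(m:ℤ), by exact_mod_cast hm, ?_⟩
      show ⌊((m:ℤ):ℝ) * phi⌋ = (j:ℤ)
      rw [show (((m:ℤ)):ℝ) = (m:ℝ) by push_cast; ring, ← cast_wa]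
      exact_mod_cast hwm
  have hB : ((j:ℤ) ∈ {x | ∃ k > 0, beattySeq (phi + 1) k = x}) ↔
      ∃ m, 0 < m ∧ wa m + m = j := by
    have hbs : ∀ k : ℤ, beattySeq (phi + 1) k = ⌊(k:ℝ) * phi⌋ + k := by
      intro k
      show ⌊(k:ℝ) * (phi + 1)⌋ = _
      rw [show (k:ℝ) * (phi + 1) = (k:ℝ) * phi + (k:ℤ) by push_cast; ring,
        Int.floor_add_intCast]
    constructor
    · rintro ⟨k, hk, hbk⟩
      rw [hbs] at hbk
      refine ⟨k.toNat, by omega, ?_⟩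
      have hkk : ((k.toNat : ℕ) : ℝ) = (k : ℝ) := by
        exact_mod_cast congrArg (Int.cast : ℤ → ℝ) (Int.toNat_of_nonneg hk.le)
      have : ((wa k.toNat + k.toNat : ℕ) : ℤ) = (j : ℤ) := by
        rw [Nat.cast_add, cast_wa, hkk]
        rw [← hbk]
        simp [Int.toNat_of_nonneg hk.le]
      exact_mod_cast this
    · rintro ⟨m, hm, hwm⟩
      refine ⟨(m:ℤ), by exact_mod_cast hm, ?_⟩
      rw [hbs]
      have : ((wa m : ℕ) : ℤ) = ⌊((m:ℤ):ℝ) * phi⌋ := by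
        rw [cast_wa]; norm_cast
      rw [← this]
      exact_mod_cast hwm
  rcases hjmem with ⟨h1, h2⟩ | ⟨h1, h2⟩
  · exact Or.inl ⟨hA.mp h1, fun hc => h2 (hB.mpr hc)⟩
  · exact Or.inr ⟨hB.mp h1, fun hc => h2 (hA.mpr hc)⟩

/-- f_{i,j}(n) = F(i+1)·a(n) + F(i)·n − j. -/
noncomputable def fij (i : ℕ) (j : ℤ) (n : ℕ) : ℤ :=
  (Nat.fib (i + 1) : ℤ) * wa n + (Nat.fib i : ℤ) * n - j

/-- R_{i,j} = { f_{i,j}(n) : n ∈ ℕ, n ≥ 1 }. -/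
def R (i : ℕ) (j : ℤ) : Set ℤ := {m | ∃ n : ℕ, 0 < n ∧ fij i j n = m}

lemma fij10 (n : ℕ) : fij 1 0 n = (wa n : ℤ) + n := by
  unfold fij; norm_num [Nat.fib]
lemma fij20 (n : ℕ) : fij 2 0 n = 2 * (wa n : ℤ) + n := by
  unfold fij; norm_num [Nat.fib]
lemma fij22 (n : ℕ) : fij 2 2 n = 2 * (wa n : ℤ) + n - 2 := by
  unfold fij; norm_num [Nat.fib]
lemma fij31 (n : ℕ) : fij 3 1 n = 3 * (wa n : ℤ) + 2 * n - 1 := by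
  unfold fij; norm_num [Nat.fib]

lemma waaa {m : ℕ} (h : 0 < m) : (wa (wa (wa m)) : ℤ) = 2 * wa m + m - 2 := by
  have h1 := waa h
  have h2 := waa (wa_pos h)
  omega

lemma waab {m : ℕ} (h : 0 < m) : (wa (wa (wa m + m)) : ℤ) = 3 * wa m + 2 * m - 1 := by
  have hb : 0 < wa m + m := by omega
  have h1 := waa hb
  have h2 := wab h
  omega

lemma R10_iff (x : ℕ) : (x:ℤ) ∈ R 1 0 ↔ ∃ m, 0 < m ∧ wa m + m = x := by
  constructor
  · rintro ⟨n, hn, he⟩; rw [fij10] at he; exact ⟨n, hn, by exact_mod_cast he⟩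
  · rintro ⟨m, hm, he⟩; exact ⟨m, hm, by rw [fij10]; exact_mod_cast he⟩

lemma R20_iff (x : ℕ) : (x:ℤ) ∈ R 2 0 ↔ ∃ m, 0 < m ∧ wa (wa m + m) = x := by
  constructor
  · rintro ⟨n, hn, he⟩
    rw [fij20] at he
    refine ⟨n, hn, ?_⟩
    have := wab hn
    omega
  · rintro ⟨m, hm, he⟩
    refine ⟨m, hm, ?_⟩
    rw [fij20]
    have := wab hm
    omega

lemma R22_iff (x : ℕ) : (x:ℤ) ∈ R 2 2 ↔ ∃ m, 0 < m ∧ wa (wa (wa m)) = x := by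
  constructor
  · rintro ⟨n, hn, he⟩
    rw [fij22] at he
    refine ⟨n, hn, ?_⟩
    have := waaa hn
    have : ((wa (wa (wa n)) : ℕ) : ℤ) = (x:ℤ) := by omega
    exact_mod_cast this
  · rintro ⟨m, hm, he⟩
    refine ⟨m, hm, ?_⟩
    rw [fij22, ← waaa hm]
    exact_mod_cast he

lemma R31_iff (x : ℕ) : (x:ℤ) ∈ R 3 1 ↔ ∃ m, 0 < m ∧ wa (wa (wa m + m)) = x := by
  constructor
  · rintro ⟨n, hn, he⟩
    rw [fij31] at he
    refine ⟨n, hn, ?_⟩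
    have := waab hn
    have : ((wa (wa (wa n + n)) : ℕ) : ℤ) = (x:ℤ) := by omega
    exact_mod_cast this
  · rintro ⟨m, hm, he⟩
    refine ⟨m, hm, ?_⟩
    rw [fij31, ← waab hm]
    exact_mod_cast he

lemma wa_inj : Function.Injective wa := wa_strictMono.injective

/-- A value `wa p` (p>0) is never of the form `wa m + m` (m>0). -/
lemma notB {p : ℕ} (hp : 0 < p) : ¬∃ m, 0 < m ∧ wa m + m = wa p := by
  have hwp : 0 < wa p := wa_pos hp
  rcases beatty (wa p) hwp with ⟨_, h2⟩ | ⟨_, h2⟩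
  · exact h2
  · exact absurd ⟨p, hp, rfl⟩ h2

/-- Every positive integer is of exactly one of the four forms. -/
lemma coverage (j : ℕ) (hj : 0 < j) :
    (∃ m, 0 < m ∧ wa m + m = j) ∨ (∃ m, 0 < m ∧ wa (wa m + m) = j) ∨
    (∃ m, 0 < m ∧ wa (wa (wa m)) = j) ∨ (∃ m, 0 < m ∧ wa (wa (wa m + m)) = j) := by
  rcases beatty j hj with ⟨⟨p, hp, hpe⟩, _⟩ | ⟨⟨m, hm, hme⟩, _⟩
  · -- j = wa p
    rcases beatty p hp with ⟨⟨q, hq, hqe⟩, _⟩ | ⟨⟨k, hk, hke⟩, _⟩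
    · -- p = wa q
      rcases beatty q hq with ⟨⟨r, hr, hre⟩, _⟩ | ⟨⟨l, hl, hle⟩, _⟩
      · -- q = wa r : j = wa (wa (wa r))
        exact Or.inr (Or.inr (Or.inl ⟨r, hr, by rw [hre, hqe, hpe]⟩))
      · -- q = wa l + l : j = wa (wa (wa l + l))
        exact Or.inr (Or.inr (Or.inr ⟨l, hl, by rw [hle, hqe, hpe]⟩))
    · -- p = wa k + k : j = wa (wa k + k)
      exact Or.inr (Or.inl ⟨k, hk, by rw [hke, hpe]⟩)
  · exact Or.inl ⟨m, hm, hme⟩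

open scoped Classical in
/-- g(n) = ⌊φn⌋−2 if n ∈ R_{1,0}, ⌊φn⌋ if n ∈ R_{2,0}, ⌊(φ−1)n⌋+2 if n ∈ R_{2,2},
and ⌊(φ−1)n⌋+1 if n ∈ R_{3,1}. -/
noncomputable def g (n : ℕ) : ℕ :=
  if (n : ℤ) ∈ R 1 0 then wa n - 2
  else if (n : ℤ) ∈ R 2 0 then wa n
  else if (n : ℤ) ∈ R 2 2 then ⌊(phi - 1) * (n : ℝ)⌋₊ + 2
  else ⌊(phi - 1) * (n : ℝ)⌋₊ + 1

-- g on B-elements: g (wa m + m) = wa (wa (wa m))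
lemma g_on_B {m : ℕ} (hm : 0 < m) : g (wa m + m) = wa (wa (wa m)) := by
  have hmem : ((wa m + m : ℕ) : ℤ) ∈ R 1 0 := (R10_iff _).mpr ⟨m, hm, rfl⟩
  rw [g, if_pos hmem]
  have h1 := wab hm
  have h2 := waaa hm
  have h3 := wa_pos hm
  omega

-- g on aB-elements: g (wa (wa m + m)) = wa (wa (wa m + m))
lemma g_on_aB {m : ℕ} (hm : 0 < m) : g (wa (wa m + m)) = wa (wa (wa m + m)) := by
  have hb : 0 < wa m + m := by have := wa_pos hm; omega
  have hnot1 : ¬ ((wa (wa m + m) : ℕ) : ℤ) ∈ R 1 0 := by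
    rw [R10_iff]; exact notB hb
  have hmem : ((wa (wa m + m) : ℕ) : ℤ) ∈ R 2 0 := (R20_iff _).mpr ⟨m, hm, rfl⟩
  rw [g, if_neg hnot1, if_pos hmem]

-- g on aaA-elements: g (wa (wa (wa m))) = wa m + m
lemma g_on_aaA {m : ℕ} (hm : 0 < m) : g (wa (wa (wa m))) = wa m + m := by
  have h1 : 0 < wa m := wa_pos hm
  have h2 : 0 < wa (wa m) := wa_pos h1
  have hnot1 : ¬ ((wa (wa (wa m)) : ℕ) : ℤ) ∈ R 1 0 := by
    rw [R10_iff]; exact notB h2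
  have hnot2 : ¬ ((wa (wa (wa m)) : ℕ) : ℤ) ∈ R 2 0 := by
    rw [R20_iff]
    rintro ⟨k, hk, hke⟩
    have hbk : 0 < wa k + k := by have := wa_pos hk; omega
    have : wa k + k = wa (wa m) := wa_inj (wa_inj hke ▸ rfl)
    exact notB h1 ⟨k, hk, this⟩
  have hmem : ((wa (wa (wa m)) : ℕ) : ℤ) ∈ R 2 2 := (R22_iff _).mpr ⟨m, hm, rfl⟩
  rw [g, if_neg hnot1, if_neg hnot2, if_pos hmem]
  have := winv h2
  have := waa hm
  omega

-- g on aaB-elements: g (wa (wa (wa m + m))) = wa (wa m + m)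
lemma g_on_aaB {m : ℕ} (hm : 0 < m) : g (wa (wa (wa m + m))) = wa (wa m + m) := by
  have hb : 0 < wa m + m := by have := wa_pos hm; omega
  have h1 : 0 < wa (wa m + m) := wa_pos hb
  have hnot1 : ¬ ((wa (wa (wa m + m)) : ℕ) : ℤ) ∈ R 1 0 := by
    rw [R10_iff]; exact notB h1
  have hnot2 : ¬ ((wa (wa (wa m + m)) : ℕ) : ℤ) ∈ R 2 0 := by
    rw [R20_iff]
    rintro ⟨k, hk, hke⟩
    have : wa k + k = wa (wa m + m) := wa_inj hke
    exact notB hb ⟨k, hk, this⟩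
  have hnot3 : ¬ ((wa (wa (wa m + m)) : ℕ) : ℤ) ∈ R 2 2 := by
    rw [R22_iff]
    rintro ⟨k, hk, hke⟩
    have : wa k = wa m + m := wa_inj (wa_inj hke)
    exact notB hk ⟨m, hm, this.symm⟩
  rw [g, if_neg hnot1, if_neg hnot2, if_neg hnot3]
  have := winv h1
  omega

lemma g_pos {n : ℕ} (hn : 0 < n) : 0 < g n := by
  rcases coverage n hn with ⟨m, hm, he⟩ | ⟨m, hm, he⟩ | ⟨m, hm, he⟩ | ⟨m, hm, he⟩
  · rw [← he, g_on_B hm]; exact wa_pos (wa_pos (wa_pos hm))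
  · rw [← he, g_on_aB hm]
    exact wa_pos (wa_pos (by have := wa_pos hm; omega))
  · rw [← he, g_on_aaA hm]; omega
  · rw [← he, g_on_aaB hm]
    exact wa_pos (by have := wa_pos hm; omega)

lemma g_invol {n : ℕ} (hn : 0 < n) : g (g n) = n := by
  rcases coverage n hn with ⟨m, hm, he⟩ | ⟨m, hm, he⟩ | ⟨m, hm, he⟩ | ⟨m, hm, he⟩
  · rw [← he, g_on_B hm, g_on_aaA hm]
  · rw [← he, g_on_aB hm, g_on_aaB hm]
  · rw [← he, g_on_aaA hm, g_on_B hm]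
  · rw [← he, g_on_aaB hm, g_on_aB hm]

lemma wa_one : wa 1 = 1 := by
  apply wa_floor_eq <;> push_cast <;> nlinarith [one_lt_phi, phi_lt_two]

theorem stmt_8 :
    Set.BijOn g {n : ℕ | 0 < n} {n : ℕ | 0 < n} ∧
    (∀ n : ℕ, 0 < n → g (g n) = n) ∧
    (∃ n : ℕ, 0 < n ∧ g n ≠ n) := by
  have hmap : Set.MapsTo g {n : ℕ | 0 < n} {n : ℕ | 0 < n} := fun n hn => g_pos hn
  refine ⟨?_, fun n hn => g_invol hn, ?_⟩
  · exact Set.InvOn.bijOn ⟨fun n hn => g_invol hn, fun n hn => g_invol hn⟩ hmap hmap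
  · refine ⟨1, one_pos, ?_⟩
    have h1 : wa (wa (wa 1)) = 1 := by rw [wa_one, wa_one, wa_one]
    have := g_on_aaA (m := 1) one_pos
    rw [h1, wa_one] at this
    omega
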